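/- If X is a Tychonoff space such that C(X) with the graph topology is hereditarily Baire (every nonempty closed subspace is a Baire space), then X is countably compact. -/

import Mathlib

/-- A space is countably compact if every countable open cover has a finite subcover. -/
def CountablyCompact (X : Type*) [TopologicalSpace X] : Prop :=
  ∀ U : ℕ → Set X, (∀ n, IsOpen (U n)) → (⋃ n, U n) = Set.univ →
    ∃ s : Finset ℕ, (⋃ n ∈ s, U n) = Set.univ

/-- The basic set `B(f,ε)` of the graph topology on `C(X,ℝ)`. -/
def gball {X : Type*} [TopologicalSpace X] (f : C(X, ℝ)) (ε : X → ℝ) : Set C(X, ℝ) :=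
  {g | ∀ x, |f x - g x| < ε x}

/-- The graph topology on `C(X,ℝ)`. -/
def graphTop (X : Type*) [TopologicalSpace X] : TopologicalSpace C(X, ℝ) :=
  TopologicalSpace.generateFrom
    {S | ∃ (f : C(X, ℝ)) (ε : X → ℝ),
      LowerSemicontinuous ε ∧ (∀ x, 0 < ε x) ∧ S = gball f ε}

section Aux

variable {X : Type*} [TopologicalSpace X]

lemma lsc_min {ε₁ ε₂ : X → ℝ} (h₁ : LowerSemicontinuous ε₁) (h₂ : LowerSemicontinuous ε₂) :
    LowerSemicontinuous (fun x => min (ε₁ x) (ε₂ x)) := by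
  intro x t ht
  have ht1 : t < ε₁ x := lt_of_lt_of_le ht (min_le_left _ _)
  have ht2 : t < ε₂ x := lt_of_lt_of_le ht (min_le_right _ _)
  filter_upwards [h₁ x t ht1, h₂ x t ht2] with y hy1 hy2
  exact lt_min hy1 hy2

lemma gball_open {f : C(X, ℝ)} {ε : X → ℝ} (hlsc : LowerSemicontinuous ε)
    (hpos : ∀ x, 0 < ε x) : @IsOpen _ (graphTop X) (gball f ε) :=
  TopologicalSpace.isOpen_generateFrom_of_mem ⟨f, ε, hlsc, hpos, rfl⟩

/-- Around any point of a `graphTop`-open set there is a `gball`. -/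
lemma exists_gball_subset {O : Set C(X, ℝ)} (hO : @IsOpen _ (graphTop X) O) :
    ∀ f ∈ O, ∃ ε : X → ℝ, LowerSemicontinuous ε ∧ (∀ x, 0 < ε x) ∧ gball f ε ⊆ O := by
  change TopologicalSpace.GenerateOpen _ O at hO
  induction hO with
  | basic s hs =>
      obtain ⟨f', ε', hlsc, hpos, rfl⟩ := hs
      intro f hf
      refine ⟨fun x => ε' x + -|f' x - f x|, ?_, ?_, ?_⟩
      · exact hlsc.add (((map_continuous f').sub (map_continuous f)).abs.neg.lowerSemicontinuous)
      · intro x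
        dsimp only
        have := hf x
        linarith
      · intro g hg x
        have h1 := hg x
        dsimp only at h1
        have h2 : |f' x - g x| ≤ |f' x - f x| + |f x - g x| := abs_sub_le _ _ _
        linarith
  | univ =>
      intro f _
      exact ⟨fun _ => 1, lowerSemicontinuous_const, fun _ => one_pos, fun _ _ => Set.mem_univ _⟩
  | inter s t _ _ ih1 ih2 =>
      intro f hf
      obtain ⟨ε₁, h₁, p₁, s₁⟩ := ih1 f hf.1
      obtain ⟨ε₂, h₂, p₂, s₂⟩ := ih2 f hf.2
      refine ⟨fun x => min (ε₁ x) (ε₂ x), lsc_min h₁ h₂, fun x => lt_min (p₁ x) (p₂ x), ?_⟩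
      intro g hg
      exact ⟨s₁ fun x => lt_of_lt_of_le (hg x) (min_le_left _ _),
        s₂ fun x => lt_of_lt_of_le (hg x) (min_le_right _ _)⟩
  | sUnion S _ ih =>
      intro f hf
      obtain ⟨s, hsS, hfs⟩ := hf
      obtain ⟨ε, h1, h2, h3⟩ := ih s hsS f hfs
      exact ⟨ε, h1, h2, fun g hg => ⟨s, hsS, h3 hg⟩⟩

end Aux

theorem stmt8 {X : Type*} [TopologicalSpace X] [T1Space X] [CompletelyRegularSpace X]
    (h : ∀ F : Set C(X, ℝ), F.Nonempty → @IsClosed C(X, ℝ) (graphTop X) F →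
      @BaireSpace F (TopologicalSpace.induced Subtype.val (graphTop X))) :
    CountablyCompact X := by
  classical
  by_contra hcc
  rw [CountablyCompact] at hcc
  push_neg at hcc
  obtain ⟨U, hUopen, hUcov, hUfin⟩ := hcc
  -- choose a sequence escaping all finite initial subcovers
  have hex : ∀ n : ℕ, ∃ y : X, y ∉ ⋃ i ∈ Finset.range (n + 1), U i := by
    intro n
    exact Set.ne_univ_iff_exists_notMem _ |>.mp (hUfin (Finset.range (n + 1)))
  choose x hx using hex
  -- local finiteness of the sequence
  have hlf : ∀ y : X, ∃ V : Set X, IsOpen V ∧ y ∈ V ∧ {n : ℕ | x n ∈ V}.Finite := by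
    intro y
    have : y ∈ ⋃ n, U n := hUcov ▸ Set.mem_univ y
    obtain ⟨M, hM⟩ := Set.mem_iUnion.mp this
    refine ⟨U M, hUopen M, hM, (Set.finite_Iio M).subset ?_⟩
    intro n hn
    by_contra hnM
    simp only [Set.mem_Iio, not_lt] at hnM
    exact hx n (Set.mem_biUnion (Finset.mem_range.mpr (Nat.lt_succ_of_le hnM)) hn)
  -- the σ-product-like set F and its pieces
  set F : Set C(X, ℝ) := {f | {n : ℕ | f (x n) ≠ 0}.Finite} with hFdef
  set Fk : ℕ → Set C(X, ℝ) := fun k => {f | ∀ n, k ≤ n → f (x n) = 0} with hFkdef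
  have hF0 : (0 : C(X, ℝ)) ∈ F := by
    simp [hFdef]
  -- F is closed
  have hFclosed : @IsClosed _ (graphTop X) F := by
    refine (@isOpen_compl_iff _ F (graphTop X)).mp ?_
    rw [@isOpen_iff_forall_mem_open _ (graphTop X)]
    intro f hf
    simp only [Set.mem_compl_iff, hFdef, Set.mem_setOf_eq] at hf
    set ε : X → ℝ := fun y => if (∃ n, x n = y) ∧ f y ≠ 0 then min 1 |f y| else 1 with hεdef
    have hεle : ∀ y, ε y ≤ 1 := by
      intro y
      by_cases hy : (∃ n, x n = y) ∧ f y ≠ 0 <;> simp [hεdef, hy]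
    have hεpos : ∀ y, 0 < ε y := by
      intro y
      by_cases hy : (∃ n, x n = y) ∧ f y ≠ 0
      · simp only [hεdef]
        rw [if_pos hy]
        exact lt_min one_pos (abs_pos.mpr hy.2)
      · simp [hεdef, hy]
    have hεlsc : LowerSemicontinuous ε := by
      intro y t ht
      obtain ⟨V0, hV0open, hyV0, hV0fin⟩ := hlf y
      set V : Set X := V0 \ ((x '' {n | x n ∈ V0}) \ {y}) with hVdef
      have hVopen : IsOpen V :=
        hV0open.sdiff (((hV0fin.image x).subset (Set.diff_subset)).isClosed)
      have hyV : y ∈ V := ⟨hyV0, fun hmem => hmem.2 rfl⟩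
      filter_upwards [hVopen.mem_nhds hyV] with z hz
      rcases eq_or_ne z y with rfl | hzy
      · exact ht
      · have : ¬∃ n, x n = z := by
          rintro ⟨n, rfl⟩
          exact hz.2 ⟨Set.mem_image_of_mem x hz.1, hzy⟩
        have : ε z = 1 := by
          simp [hεdef, this]
        rw [this]
        exact lt_of_lt_of_le ht (hεle y)
    refine ⟨gball f ε, ?_, gball_open hεlsc hεpos, fun z => ?_⟩
    · intro g hg
      simp only [Set.mem_compl_iff, hFdef, Set.mem_setOf_eq]
      intro hgfin
      apply hf
      apply hgfin.subset
      intro n hn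
      simp only [Set.mem_setOf_eq] at hn ⊢
      intro hgn
      have hε : ε (x n) ≤ |f (x n)| := by
        simp only [hεdef, if_pos (⟨⟨n, rfl⟩, hn⟩ : (∃ m, x m = x n) ∧ f (x n) ≠ 0)]
        exact min_le_right _ _
      have := hg (x n)
      rw [hgn, sub_zero] at this
      linarith
    · simp [gball, sub_self, abs_zero, hεpos z]
  -- each Fk is closed
  have hFkclosed : ∀ k, @IsClosed _ (graphTop X) (Fk k) := by
    intro k
    refine (@isOpen_compl_iff _ (Fk k) (graphTop X)).mp ?_
    rw [@isOpen_iff_forall_mem_open _ (graphTop X)]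
    intro f hf
    simp only [Set.mem_compl_iff, hFkdef, Set.mem_setOf_eq] at hf
    push_neg at hf
    obtain ⟨n, hkn, hfn⟩ := hf
    refine ⟨gball f (fun _ => |f (x n)|), ?_, gball_open lowerSemicontinuous_const
      (fun _ => abs_pos.mpr hfn), fun z => ?_⟩
    · intro g hg
      simp only [Set.mem_compl_iff, hFkdef, Set.mem_setOf_eq]
      push_neg
      refine ⟨n, hkn, ?_⟩
      intro hgn
      have := hg (x n)
      rw [hgn, sub_zero] at this
      exact lt_irrefl _ this
    · simp [gball, sub_self, abs_zero, abs_pos.mpr hfn]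
  -- key density step: F ∖ Fk is dense in F
  have hdense : ∀ (k : ℕ) (f : C(X, ℝ)), f ∈ F → ∀ ε : X → ℝ, LowerSemicontinuous ε →
      (∀ y, 0 < ε y) → ∃ g : C(X, ℝ), g ∈ F ∧ g ∉ Fk k ∧ g ∈ gball f ε := by
    intro k f hfF ε hεlsc hεpos
    -- pick m ≥ k with f (x m) = 0
    obtain ⟨b, hb⟩ := hfF.bddAbove
    set m : ℕ := max k (b + 1) with hmdef
    have hkm : k ≤ m := le_max_left _ _
    have hfm : f (x m) = 0 := by
      by_contra hne
      have h1 := hb hne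
      have h2 : b + 1 ≤ m := le_max_right _ _
      omega
    obtain ⟨W, hWopen, hxW, hWfin⟩ := hlf (x m)
    set c : ℝ := ε (x m) / 2 with hcdef
    have hcpos : 0 < c := half_pos (hεpos (x m))
    set Uo : Set X := W ∩ {y | c < ε y} with hUodef
    have hUoopen : IsOpen Uo := hWopen.inter (hεlsc.isOpen_preimage c)
    have hxUo : x m ∈ Uo := ⟨hxW, by simp [hcdef]; linarith [hεpos (x m)]⟩
    obtain ⟨bump, hbc, hb0, hb1⟩ :=
      CompletelyRegularSpace.completely_regular (x m) Uoᶜ hUoopen.isClosed_compl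
        (fun hx' => hx' hxUo)
    set g : C(X, ℝ) := ⟨fun y => f y + c * (1 - (bump y : ℝ)),
      (map_continuous f).add (continuous_const.mul (continuous_const.sub
        (continuous_subtype_val.comp hbc)))⟩ with hgdef
    have hgval : ∀ y, g y = f y + c * (1 - (bump y : ℝ)) := fun y => rfl
    have hgF : g ∈ F := by
      apply (hfF.union hWfin).subset
      intro n hn
      simp only [Set.mem_setOf_eq, Set.mem_union] at hn ⊢
      by_contra hcon
      push_neg at hcon
      obtain ⟨h1, h2⟩ := hcon
      rw [hgval, h1, zero_add] at hn
      have hbn : (bump (x n) : ℝ) ≠ 1 := by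
        intro heq
        rw [heq] at hn
        simp at hn
      have : x n ∈ Uo := by
        by_contra hnot
        exact hbn (by exact_mod_cast congrArg Subtype.val (hb1 hnot))
      exact h2 this.1
    have hgnFk : g ∉ Fk k := by
      simp only [hFkdef, Set.mem_setOf_eq]
      push_neg
      refine ⟨m, hkm, ?_⟩
      rw [hgval, hfm, hb0, zero_add]
      simp only [Set.Icc.coe_zero]
      rw [sub_zero, mul_one]
      exact ne_of_gt hcpos
    have hgball : g ∈ gball f ε := by
      intro y
      rw [hgval]
      have hb01 : (bump y : ℝ) ∈ Set.Icc (0 : ℝ) 1 := (bump y).2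
      have habs : |f y - (f y + c * (1 - (bump y : ℝ)))| = c * (1 - (bump y : ℝ)) := by
        rw [sub_add_cancel_left, abs_neg, abs_of_nonneg]
        exact mul_nonneg hcpos.le (by linarith [hb01.2])
      rw [habs]
      by_cases hy : y ∈ Uo
      · have : c < ε y := hy.2
        nlinarith [hb01.1, hb01.2]
      · have : (bump y : ℝ) = 1 := by exact_mod_cast congrArg Subtype.val (hb1 hy)
        rw [this]
        simpa using hεpos y
    exact ⟨g, hgF, hgnFk, hgball⟩
  -- Baire space contradiction
  have hBaire := h F ⟨0, hF0⟩ hFclosed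
  letI TF : TopologicalSpace F := TopologicalSpace.induced Subtype.val (graphTop X)
  set G : ℕ → Set F := fun k => Subtype.val ⁻¹' (Fk k)ᶜ with hGdef
  have hGopen : ∀ k, @IsOpen F TF (G k) := by
    intro k
    exact (@isOpen_induced_iff _ _ (graphTop X) (G k) Subtype.val).mpr
      ⟨(Fk k)ᶜ, (@isOpen_compl_iff _ (Fk k) (graphTop X)).mpr (hFkclosed k), rfl⟩
  have hGdense : ∀ k, @Dense F TF (G k) := by
    intro k
    rw [@dense_iff_inter_open _ TF (G k)]
    rintro Uf hUf ⟨⟨f, hfF⟩, hfU⟩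
    obtain ⟨O, hOopen, rfl⟩ := (@isOpen_induced_iff _ _ (graphTop X) Uf Subtype.val).mp hUf
    obtain ⟨ε, hεlsc, hεpos, hεsub⟩ := exists_gball_subset hOopen f hfU
    obtain ⟨g, hgF, hgnFk, hgball⟩ := hdense k f hfF ε hεlsc hεpos
    exact ⟨⟨g, hgF⟩, hεsub hgball, hgnFk⟩
  have hinter : @Dense F TF (⋂ k, G k) :=
    @dense_iInter_of_isOpen _ ℕ TF hBaire _ G hGopen hGdense
  have hne : Nonempty F := ⟨⟨0, hF0⟩⟩
  obtain ⟨⟨f, hfF⟩, hfall⟩ := hinter.nonempty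
  rw [Set.mem_iInter] at hfall
  -- but f has finitely many nonzero values: contradiction
  obtain ⟨b, hb⟩ := hfF.bddAbove
  have := hfall (b + 1)
  simp only [hGdef, Set.mem_preimage, Set.mem_compl_iff, hFkdef, Set.mem_setOf_eq] at this
  push_neg at this
  obtain ⟨n, hn1, hn2⟩ := this
  have := hb hn2
  omega
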